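/- Let P be an incomplete weighted profile over a finite set of candidates. Then the fair weak Condorcet winners coincide with the weak Condorcet winners: FWC(P) = WC(P). That is, there is a completion of P in which a candidate wins every balanced agenda if and only if there is a completion in which it wins every agenda. -/

import Mathlib

open scoped Classical

/-- An agenda: a binary tree whose leaves are labelled with candidates. -/
inductive Agenda (α : Type) : Type
  | leaf (a : α) : Agenda α
  | node (l r : Agenda α) : Agenda α

namespace Agenda

/-- The list of leaf labels of an agenda. -/
def leaves {α : Type} : Agenda α → List α
  | leaf a => [a]
  | node l r => leaves l ++ leaves r

/-- The list of depths of the leaves of an agenda. -/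
def depths {α : Type} : Agenda α → List ℕ
  | leaf _ => [0]
  | node l r => (depths l ++ depths r).map (· + 1)

end Agenda

/-- A valid agenda: leaves labelled bijectively with the candidates. -/
def IsAgenda {α : Type} [Fintype α] (t : Agenda α) : Prop :=
  t.leaves.Nodup ∧ ∀ a : α, a ∈ t.leaves

/-- A balanced agenda: max and min leaf depths differ by at most 1. -/
def IsBalanced {α : Type} (t : Agenda α) : Prop :=
  ∀ d₁ ∈ t.depths, ∀ d₂ ∈ t.depths, d₁ ≤ d₂ + 1

/-- A tournament: complete asymmetric directed graph on the candidates. -/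
def IsTournament {α : Type} (T : α → α → Prop) : Prop :=
  (∀ a, ¬ T a a) ∧ ∀ a b : α, a ≠ b → (T a b ↔ ¬ T b a)

/-- Winner of an agenda under a tournament: each internal node is won by
whichever child's winner beats the other; the root's candidate wins. -/
noncomputable def winner {α : Type} (T : α → α → Prop) : Agenda α → α
  | .leaf a => a
  | .node l r => if T (winner T l) (winner T r) then winner T l else winner T r

/-- Strict partial order: asymmetric and transitive. -/
def IsSPO {α : Type} (r : α → α → Prop) : Prop :=
  (∀ a b, r a b → ¬ r b a) ∧ (∀ a b c, r a b → r b c → r a c)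

/-- Strict total order. -/
def IsSTO {α : Type} (r : α → α → Prop) : Prop :=
  IsSPO r ∧ ∀ a b : α, a ≠ b → r a b ∨ r b a

/-- An (incomplete) weighted profile: a finite sequence of agents, each with a
positive weight and a strict partial order, the sum of weights being odd. -/
structure Profile (α : Type) where
  agents : List (ℕ × (α → α → Prop))
  pos : ∀ p ∈ agents, 0 < p.1
  spo : ∀ p ∈ agents, IsSPO p.2
  oddSum : Odd (agents.map Prod.fst).sum

/-- Total weight of agents preferring `a` to `b`. -/
noncomputable def prefWeight {α : Type} (P : Profile α) (a b : α) : ℕ :=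
  (P.agents.map (fun p => if p.2 a b then p.1 else 0)).sum

/-- The majority graph of a profile. -/
def maj {α : Type} (P : Profile α) (a b : α) : Prop :=
  prefWeight P b a < prefWeight P a b

/-- `Q` is a completion of `P`: same weights, each agent's partial order is
replaced by a strict total order extending it. -/
def IsCompletion {α : Type} (P Q : Profile α) : Prop :=
  List.Forall₂ (fun p q => p.1 = q.1 ∧ IsSTO q.2 ∧ ∀ a b, p.2 a b → q.2 a b)
    P.agents Q.agents

/-- `T` extends the (incomplete majority) graph `G`. -/
def Extends {α : Type} (G T : α → α → Prop) : Prop := ∀ a b, G a b → T a b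

/-- `A` wins some agenda under `T`. -/
def WinsSome {α : Type} [Fintype α] (T : α → α → Prop) (A : α) : Prop :=
  ∃ t : Agenda α, IsAgenda t ∧ winner T t = A

/-- `A` wins every agenda under `T`. -/
def WinsAll {α : Type} [Fintype α] (T : α → α → Prop) (A : α) : Prop :=
  ∀ t : Agenda α, IsAgenda t → winner T t = A

/-- `A` wins some balanced agenda under `T`. -/
def FWinsSome {α : Type} [Fintype α] (T : α → α → Prop) (A : α) : Prop :=
  ∃ t : Agenda α, IsAgenda t ∧ IsBalanced t ∧ winner T t = A

/-- `A` wins every balanced agenda under `T`. -/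
def FWinsAll {α : Type} [Fintype α] (T : α → α → Prop) (A : α) : Prop :=
  ∀ t : Agenda α, IsAgenda t → IsBalanced t → winner T t = A

/-- Weak possible winner of a profile. -/
def WPp {α : Type} [Fintype α] (P : Profile α) (A : α) : Prop :=
  ∃ Q : Profile α, IsCompletion P Q ∧ WinsSome (maj Q) A

/-- Strong possible winner of a profile. -/
def SPp {α : Type} [Fintype α] (P : Profile α) (A : α) : Prop :=
  ∀ Q : Profile α, IsCompletion P Q → WinsSome (maj Q) A

/-- Weak Condorcet winner of a profile. -/
def WCp {α : Type} [Fintype α] (P : Profile α) (A : α) : Prop :=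
  ∃ Q : Profile α, IsCompletion P Q ∧ WinsAll (maj Q) A

/-- Strong Condorcet winner of a profile. -/
def SCp {α : Type} [Fintype α] (P : Profile α) (A : α) : Prop :=
  ∀ Q : Profile α, IsCompletion P Q → WinsAll (maj Q) A

/-- Weak possible winner of an incomplete majority graph. -/
def WPg {α : Type} [Fintype α] (G : α → α → Prop) (A : α) : Prop :=
  ∃ T : α → α → Prop, IsTournament T ∧ Extends G T ∧ WinsSome T A

/-- Strong possible winner of an incomplete majority graph. -/
def SPg {α : Type} [Fintype α] (G : α → α → Prop) (A : α) : Prop :=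
  ∀ T : α → α → Prop, IsTournament T → Extends G T → WinsSome T A

/-- Weak Condorcet winner of an incomplete majority graph. -/
def WCg {α : Type} [Fintype α] (G : α → α → Prop) (A : α) : Prop :=
  ∃ T : α → α → Prop, IsTournament T ∧ Extends G T ∧ WinsAll T A

/-- Strong Condorcet winner of an incomplete majority graph. -/
def SCg {α : Type} [Fintype α] (G : α → α → Prop) (A : α) : Prop :=
  ∀ T : α → α → Prop, IsTournament T → Extends G T → WinsAll T A

/-- A profile is unweighted if every agent has weight 1. -/
def IsUnweighted {α : Type} (P : Profile α) : Prop :=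
  ∀ p ∈ P.agents, p.1 = 1

/-- `Q` is the unweighted profile corresponding to `P`: each agent of
weight `k` is replaced by `k` agents of weight 1 with the same order. -/
def IsUnwVersion {α : Type} (P Q : Profile α) : Prop :=
  Q.agents = P.agents.flatMap (fun p => List.replicate p.1 (1, p.2))

/-- Fair strong Condorcet winner of a profile (balanced agendas only). -/
def FSCp {α : Type} [Fintype α] (P : Profile α) (A : α) : Prop :=
  ∀ Q : Profile α, IsCompletion P Q → FWinsAll (maj Q) A

/-- Fair weak Condorcet winner of a profile (balanced agendas only). -/
def FWCp {α : Type} [Fintype α] (P : Profile α) (A : α) : Prop :=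
  ∃ Q : Profile α, IsCompletion P Q ∧ FWinsAll (maj Q) A

/-- Fair weak possible winner of a profile (balanced agendas only). -/
def FWPp {α : Type} [Fintype α] (P : Profile α) (A : α) : Prop :=
  ∃ Q : Profile α, IsCompletion P Q ∧ FWinsSome (maj Q) A

noncomputable def bld {α : Type} (d : α) : List α → Agenda α
  | [] => .leaf d
  | [a] => .leaf a
  | a :: b :: l =>
      .node (bld d ((a :: b :: l).take ((l.length + 3) / 2)))
            (bld d ((a :: b :: l).drop ((l.length + 3) / 2)))
  termination_by l => l.length
  decreasing_by
    all_goals simp [List.length_take, List.length_drop]; omega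

theorem bld_leaves {α : Type} (d : α) :
    ∀ (n : ℕ) (l : List α), l.length ≤ n → l ≠ [] → (bld d l).leaves = l := by
  intro n
  induction n using Nat.strong_induction_on with
  | _ n ih =>
    intro l hl hne
    match l with
    | [a] => simp [bld, Agenda.leaves]
    | a :: b :: l' =>
      rw [bld]
      have hn : l'.length + 2 ≤ n := by simp at hl; omega
      have e1 := ih (l'.length + 1) (by omega) ((a :: b :: l').take ((l'.length + 3) / 2))
        (by simp [List.length_take]; omega) (by simp [List.take_eq_nil_iff])
      have e2 := ih (l'.length + 1) (by omega) ((a :: b :: l').drop ((l'.length + 3) / 2))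
        (by simp [List.length_drop]; omega)
        (by simp [List.drop_eq_nil_iff]; omega)
      show Agenda.leaves _ ++ Agenda.leaves _ = _
      rw [e1, e2, List.take_append_drop]

theorem clog2_le_log2_succ {n : ℕ} (hn : 1 ≤ n) : Nat.clog 2 n ≤ Nat.log 2 n + 1 := by
  rw [Nat.clog_le_iff_le_pow (by norm_num)]
  exact (Nat.lt_pow_succ_log_self (by norm_num) n).le

theorem bld_depths {α : Type} (d : α) :
    ∀ (n : ℕ) (l : List α), l.length ≤ n → l ≠ [] →
      ∀ k ∈ (bld d l).depths, Nat.log 2 l.length ≤ k ∧ k ≤ Nat.clog 2 l.length := by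
  intro n
  induction n using Nat.strong_induction_on with
  | _ n ih =>
    intro l hl hne
    match l with
    | [a] => simp [bld, Agenda.depths]
    | a :: b :: l' =>
      rw [bld]
      set N := l'.length with hN
      have hn : N + 2 ≤ n := by simp at hl; omega
      have hm : ((a :: b :: l').take ((N + 3) / 2)).length = (N + 3) / 2 := by
        simp [List.length_take]; omega
      have hr : ((a :: b :: l').drop ((N + 3) / 2)).length = (N + 2) - (N + 3) / 2 := by
        simp [List.length_drop]; omega
      have IH1 := ih (N + 1) (by omega) ((a :: b :: l').take ((N + 3) / 2))
        (by omega) (by simp [List.take_eq_nil_iff])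
      have IH2 := ih (N + 1) (by omega) ((a :: b :: l').drop ((N + 3) / 2))
        (by omega) (by simp [List.drop_eq_nil_iff]; omega)
      rw [hm] at IH1; rw [hr] at IH2
      -- key arithmetic facts
      have hclog : Nat.clog 2 (N + 2) = Nat.clog 2 ((N + 3) / 2) + 1 := by
        rw [Nat.clog_of_two_le (by norm_num) (by omega),
          show (N + 2 + 2 - 1) / 2 = (N + 3) / 2 from by omega]
      have hlogdiv : Nat.log 2 ((N + 2) / 2) = Nat.log 2 (N + 2) - 1 := Nat.log_div_base 2 (N + 2)
      have hlogm : Nat.log 2 (N + 2) - 1 ≤ Nat.log 2 ((N + 3) / 2) := by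
        rw [← hlogdiv]; exact Nat.log_mono_right (by omega)
      have hlogr : Nat.log 2 (N + 2) - 1 ≤ Nat.log 2 ((N + 2) - (N + 3) / 2) := by
        rw [← hlogdiv]; exact Nat.log_mono_right (by omega)
      have hclogr : Nat.clog 2 ((N + 2) - (N + 3) / 2) ≤ Nat.clog 2 ((N + 3) / 2) :=
        Nat.clog_mono_right 2 (by omega)
      have hlogpos : 0 < Nat.log 2 (N + 2) := Nat.log_pos (by norm_num) (by omega)
      rw [show (a :: b :: l').length = N + 2 from by simp [hN]]
      intro k hk
      simp only [Agenda.depths, List.mem_map, List.mem_append] at hk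
      obtain ⟨j, hj | hj, rfl⟩ := hk
      · have := IH1 j hj; omega
      · have := IH2 j hj; omega

theorem winner_mem_leaves {α : Type} (T : α → α → Prop) (t : Agenda α) :
    winner T t ∈ t.leaves := by
  induction t with
  | leaf a => simp [winner, Agenda.leaves]
  | node l r ihl ihr =>
    rw [winner]
    simp only [Agenda.leaves, List.mem_append]
    split
    · exact Or.inl ihl
    · exact Or.inr ihr

theorem winner_eq_of_beats {α : Type} {T : α → α → Prop} (hT : IsTournament T) {A : α}
    (hA : ∀ b, b ≠ A → T A b) (t : Agenda α) (ht : A ∈ t.leaves) : winner T t = A := by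
  induction t with
  | leaf a => simpa [Agenda.leaves, winner, eq_comm] using ht
  | node l r ihl ihr =>
    rw [winner]
    rcases (List.mem_append.1 ht) with h | h
    · rw [ihl h]
      rcases eq_or_ne (winner T r) A with h' | h'
      · rw [h']; split <;> rfl
      · rw [if_pos (hA _ h')]
    · rw [ihr h]
      rcases eq_or_ne (winner T l) A with h' | h'
      · rw [h']; split <;> rfl
      · rw [if_neg]
        exact ((hT.2 A _ (Ne.symm h')).1 (hA _ h'))

theorem bld_loses {α : Type} (d : α) {T : α → α → Prop} {A B : α}
    (hAB : A ≠ B) (hT : ¬ T A B) :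
    ∀ (n : ℕ) (rest : List α), rest.length ≤ n → (A :: B :: rest).Nodup →
      winner T (bld d (A :: B :: rest)) ≠ A := by
  intro n
  induction n using Nat.strong_induction_on with
  | _ n ih =>
    intro rest hl hnd
    have hAnot : A ∉ B :: rest := (List.nodup_cons.1 hnd).1
    match rest, hl with
    | [], _ =>
      rw [bld]
      simp only [List.length_nil]
      norm_num [bld, winner, hT]
      exact Ne.symm hAB
    | c :: rest', hl =>
      rw [bld]
      simp only [List.length_cons]
      have hl' : rest'.length + 1 ≤ n := by simpa using hl
      set N := rest'.length + 1 with hN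
      set m := (N + 3) / 2 with hm
      have hm2 : 2 ≤ m := by omega
      have htake : (A :: B :: c :: rest').take m = A :: B :: (c :: rest').take (m - 2) := by
        rw [show m = (m - 2) + 2 from by omega]; rfl
      have hdrop : (A :: B :: c :: rest').drop m = (c :: rest').drop (m - 2) := by
        rw [show m = (m - 2) + 2 from by omega]; rfl
      rw [winner, htake, hdrop]
      have hnd' : (A :: B :: (c :: rest').take (m - 2)).Nodup :=
        (((List.take_sublist _ _).cons₂ _).cons₂ _).nodup hnd
      have h1 : winner T (bld d (A :: B :: (c :: rest').take (m - 2))) ≠ A :=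
        ih ((c :: rest').take (m - 2)).length
          (by simp only [List.length_take, List.length_cons]; omega) _ le_rfl hnd'
      have h2 : winner T (bld d ((c :: rest').drop (m - 2))) ≠ A := by
        intro hEq
        have hmem := winner_mem_leaves T (bld d ((c :: rest').drop (m - 2)))
        rw [bld_leaves d ((c :: rest').drop (m - 2)).length _ le_rfl
          (by simp only [ne_eq, List.drop_eq_nil_iff, List.length_cons, not_le]; omega),
          hEq] at hmem
        exact hAnot (List.mem_cons_of_mem _ ((List.drop_subset _ _) hmem))
      split <;> assumption


theorem pw_add {α : Type} {a b : α} (hab : a ≠ b) :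
    ∀ L : List (ℕ × (α → α → Prop)), (∀ p ∈ L, IsSTO p.2) →
      (L.map (fun p => if p.2 a b then p.1 else 0)).sum
        + (L.map (fun p => if p.2 b a then p.1 else 0)).sum = (L.map Prod.fst).sum := by
  intro L hL
  induction L with
  | nil => simp
  | cons p L ih =>
    simp only [List.map_cons, List.sum_cons]
    have hs := hL p (by simp)
    have hone : (if p.2 a b then p.1 else 0) + (if p.2 b a then p.1 else 0) = p.1 := by
      rcases hs.2 a b hab with h | h
      · rw [if_pos h, if_neg (hs.1.1 a b h)]; omega
      · rw [if_neg (hs.1.1 b a h), if_pos h]; omega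
    have := ih (fun q hq => hL q (by simp [hq]))
    omega

theorem forall₂_right {β γ : Type*} {R : β → γ → Prop} {S : γ → Prop} :
    ∀ {l₁ : List β} {l₂ : List γ}, List.Forall₂ R l₁ l₂ →
      (∀ a b, R a b → S b) → ∀ b ∈ l₂, S b := by
  intro l₁ l₂ h hRS
  induction h with
  | nil => simp
  | cons h₁ h₂ ih =>
    intro b hb
    rcases List.mem_cons.1 hb with rfl | hb
    · exact hRS _ _ h₁
    · exact ih _ hb

theorem maj_tournament {α : Type} (Q : Profile α) (hsto : ∀ p ∈ Q.agents, IsSTO p.2) :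
    IsTournament (maj Q) := by
  refine ⟨fun a => lt_irrefl _, fun a b hab => ?_⟩
  have hsum := pw_add hab Q.agents hsto
  obtain ⟨k, hk⟩ := Q.oddSum
  show prefWeight Q b a < prefWeight Q a b ↔ ¬ prefWeight Q a b < prefWeight Q b a
  unfold prefWeight
  omega

/-- For an incomplete weighted profile `P`,
the fair weak Condorcet winners coincide with the weak Condorcet
winners: `FWC(P) = WC(P)`. -/
theorem stmt14 {α : Type} [Fintype α] (P : Profile α) :
    ∀ A : α, FWCp P A ↔ WCp P A := by
  intro A
  constructor
  · rintro ⟨Q, hQ, hF⟩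
    refine ⟨Q, hQ, ?_⟩
    have hsto : ∀ p ∈ Q.agents, IsSTO p.2 :=
      forall₂_right hQ (fun p q h => h.2.1)
    have hT : IsTournament (maj Q) := maj_tournament Q hsto
    have hbeats : ∀ b, b ≠ A → maj Q A b := by
      intro B hB
      by_contra hnb
      set rest := (Finset.univ \ {A, B} : Finset α).toList with hrest
      have hArest : A ∉ rest := by simp [hrest]
      have hBrest : B ∉ rest := by simp [hrest]
      have hnd : (A :: B :: rest).Nodup := by
        refine List.nodup_cons.2 ⟨?_, List.nodup_cons.2 ⟨hBrest, Finset.nodup_toList _⟩⟩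
        simp only [List.mem_cons]
        rintro (rfl | h)
        · exact hB rfl
        · exact hArest h
      have hmem : ∀ c : α, c ∈ A :: B :: rest := by
        intro c
        by_cases h1 : c = A
        · simp [h1]
        by_cases h2 : c = B
        · simp [h2]
        · simp [hrest, h1, h2]
      have hleaves : (bld A (A :: B :: rest)).leaves = A :: B :: rest :=
        bld_leaves A (A :: B :: rest).length _ le_rfl (by simp)
      have hAgenda : IsAgenda (bld A (A :: B :: rest)) :=
        ⟨by rw [hleaves]; exact hnd, fun a => by rw [hleaves]; exact hmem a⟩
      have hBal : IsBalanced (bld A (A :: B :: rest)) := by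
        intro d1 h1 d2 h2
        have b1 := bld_depths A (A :: B :: rest).length (A :: B :: rest) le_rfl (by simp) d1 h1
        have b2 := bld_depths A (A :: B :: rest).length (A :: B :: rest) le_rfl (by simp) d2 h2
        have b3 := clog2_le_log2_succ (n := (A :: B :: rest).length) (by simp)
        omega
      exact bld_loses A (fun h => hB h.symm) hnb rest.length rest le_rfl hnd
        (hF _ hAgenda hBal)
    intro t ht
    exact winner_eq_of_beats hT hbeats t (ht.2 A)
  · rintro ⟨Q, hQ, hW⟩
    exact ⟨Q, hQ, fun t ht _ => hW t ht⟩
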